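/- The polynomial p(z) = z + a_2 z^2 with complex coefficient a_2 is injective on the open unit disk if and only if |a_2| ≤ 1/2. -/

import Mathlib

theorem stmt_0 (a₂ : ℂ) :
    Set.InjOn (fun z : ℂ => z + a₂ * z ^ 2) (Metric.ball 0 1) ↔ ‖a₂‖ ≤ 1 / 2 := by
  constructor
  · intro hinj
    by_contra hgt
    push_neg at hgt
    have ha : a₂ ≠ 0 := by
      intro h; rw [h] at hgt; simp at hgt; linarith
    set c : ℂ := -(1 / (2 * a₂)) with hc
    have hcnorm : ‖c‖ < 1 := by
      rw [hc]
      rw [norm_neg, norm_div, norm_mul]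
      simp only [norm_one]
      rw [div_lt_one (mul_pos (by norm_num) (norm_pos_iff.mpr ha))]
      calc (1:ℝ) = 2 * (1/2) := by norm_num
        _ < 2 * ‖a₂‖ := by linarith
        _ = ‖(2:ℂ)‖ * ‖a₂‖ := by norm_num
    set ε : ℝ := (1 - ‖c‖) / 2 with hε
    have hεpos : 0 < ε := by rw [hε]; linarith
    have hz : c + (ε:ℂ) ∈ Metric.ball (0:ℂ) 1 := by
      rw [Metric.mem_ball, dist_zero_right]
      calc ‖c + (ε:ℂ)‖ ≤ ‖c‖ + ‖(ε:ℂ)‖ := norm_add_le _ _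
        _ = ‖c‖ + ε := by rw [Complex.norm_real, Real.norm_of_nonneg hεpos.le]
        _ < 1 := by rw [hε]; linarith
    have hw : c - (ε:ℂ) ∈ Metric.ball (0:ℂ) 1 := by
      rw [Metric.mem_ball, dist_zero_right]
      calc ‖c - (ε:ℂ)‖ ≤ ‖c‖ + ‖(ε:ℂ)‖ := norm_sub_le _ _
        _ = ‖c‖ + ε := by rw [Complex.norm_real, Real.norm_of_nonneg hεpos.le]
        _ < 1 := by rw [hε]; linarith
    have heq : (fun z : ℂ => z + a₂ * z ^ 2) (c + ε) =
        (fun z : ℂ => z + a₂ * z ^ 2) (c - ε) := by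
      simp only [hc]
      field_simp
      ring
    have := hinj hz hw heq
    have hεne : (ε:ℂ) ≠ 0 := by
      simp only [ne_eq, Complex.ofReal_eq_zero]
      exact ne_of_gt hεpos
    apply hεne
    have h2 : (2:ℂ) * ε = 0 := by linear_combination this
    field_simp at h2
    exact (mul_eq_zero.1 h2).resolve_left two_ne_zero
  · intro hle z hz w hw heq
    simp only [Metric.mem_ball, dist_zero_right] at hz hw
    simp only at heq
    have key : (z - w) * (1 + a₂ * (z + w)) = 0 := by linear_combination heq
    rcases mul_eq_zero.1 key with h | h
    · exact sub_eq_zero.1 h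
    · exfalso
      have h1 : a₂ * (z + w) = -1 := by linear_combination h
      have : ‖a₂ * (z + w)‖ < 1 := by
        rw [norm_mul]
        calc ‖a₂‖ * ‖z + w‖ ≤ (1/2) * ‖z + w‖ := by
              apply mul_le_mul_of_nonneg_right hle (norm_nonneg _)
          _ ≤ (1/2) * (‖z‖ + ‖w‖) := by
              apply mul_le_mul_of_nonneg_left (norm_add_le _ _) (by norm_num)
          _ < 1 := by linarith
      rw [h1] at this
      simp at this
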